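/- Each of the commutators [D₁, α̂], [D₁, β̂], [|D₂|, α̂], and [|D₂|, β̂], defined on the algebraic span of the basis vectors of H, extends to a bounded operator on H. -/

import Mathlib

noncomputable section

open Real

/-- Validity of an index triple `(N, I, J)` encoding `n = N/2`, `i = I/2`, `j = J/2`, with
`n ∈ ½ℤ₊` and `i, j ∈ {-n, -n+1, …, n}` (so `|I| ≤ N`, `|J| ≤ N` and `I ≡ J ≡ N (mod 2)`). -/
abbrev validH (x : ℤ × ℤ × ℤ) : Prop :=
  0 ≤ x.1 ∧ |x.2.1| ≤ x.1 ∧ |x.2.2| ≤ x.1 ∧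
    (x.1 + x.2.1) % 2 = 0 ∧ (x.1 + x.2.2) % 2 = 0

abbrev IdxH : Type := {x : ℤ × ℤ × ℤ // validH x}

/-- The Hilbert space `H = L₂(h)` with orthonormal basis `e^(n)_{ij}`. -/
abbrev Hsp : Type := lp (fun _ : IdxH => ℂ) 2

/-- The basis vector `e^(n)_{ij}` of `H`, where `n = N/2`, `i = I/2`, `j = J/2`;
it is `0` if the indices are out of range. -/
def eH (N I J : ℤ) : Hsp :=
  if h : validH (N, I, J) then lp.single 2 (⟨(N, I, J), h⟩ : IdxH) (1 : ℂ) else 0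

/-- the coefficient `q^(2n+i+j+1)` (here `n = N/2`, `i = I/2`, `j = J/2`) -/
def aC1 (q : ℝ) (N I J : ℤ) : ℝ := q ^ ((N : ℝ) + ((I : ℝ) + (J : ℝ)) / 2 + 1)

/-- the coefficient `(1-q^(2n+2i))^(1/2) * (1-q^(2n+2j))^(1/2)` -/
def aC2 (q : ℝ) (N I J : ℤ) : ℝ :=
  Real.sqrt (1 - q ^ ((N : ℝ) + (I : ℝ))) * Real.sqrt (1 - q ^ ((N : ℝ) + (J : ℝ)))

/-- the coefficient `-q^(n+j) * (1-q^(2n+2i+2))^(1/2)` -/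
def bC1 (q : ℝ) (N I J : ℤ) : ℝ :=
  -(q ^ (((N : ℝ) + (J : ℝ)) / 2)) * Real.sqrt (1 - q ^ ((N : ℝ) + (I : ℝ) + 2))

/-- the coefficient `q^(n+i) * (1-q^(2n+2j))^(1/2)` -/
def bC2 (q : ℝ) (N I J : ℤ) : ℝ :=
  q ^ (((N : ℝ) + (I : ℝ)) / 2) * Real.sqrt (1 - q ^ ((N : ℝ) + (J : ℝ)))

/-- `A` acts on the basis vectors of `H` by the defining formula of `α̂`:
`α̂ e^(n)_{ij} = q^(2n+i+j+1) e^(n+1/2)_{i-1/2,j-1/2}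
  + (1-q^(2n+2i))^(1/2) (1-q^(2n+2j))^(1/2) e^(n-1/2)_{i-1/2,j-1/2}`. -/
def IsAlphaHat (q : ℝ) (A : Hsp →L[ℂ] Hsp) : Prop :=
  ∀ N I J : ℤ, validH (N, I, J) →
    A (eH N I J) = (aC1 q N I J : ℂ) • eH (N + 1) (I - 1) (J - 1)
      + (aC2 q N I J : ℂ) • eH (N - 1) (I - 1) (J - 1)

/-- `B` acts on the basis vectors of `H` by the defining formula of `β̂`:
`β̂ e^(n)_{ij} = -q^(n+j) (1-q^(2n+2i+2))^(1/2) e^(n+1/2)_{i+1/2,j-1/2}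
  + q^(n+i) (1-q^(2n+2j))^(1/2) e^(n-1/2)_{i+1/2,j-1/2}`. -/
def IsBetaHat (q : ℝ) (B : Hsp →L[ℂ] Hsp) : Prop :=
  ∀ N I J : ℤ, validH (N, I, J) →
    B (eH N I J) = (bC1 q N I J : ℂ) • eH (N + 1) (I + 1) (J - 1)
      + (bC2 q N I J : ℂ) • eH (N - 1) (I + 1) (J - 1)

/-- the eigenvalue of `D₁` on `e^(n)_{ij}`: `-2n` if `j ≠ n`, `2n+1` if `j = n`
(here `n = N/2`, `j = J/2`) -/
def lamD1 (N I J : ℤ) : ℝ := if J = N then (N : ℝ) + 1 else -(N : ℝ)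

/-- the eigenvalue of `|D₂|` on `e^(n)_{ij}`: `2n+1` -/
def lamD2 (N I J : ℤ) : ℝ := (N : ℝ) + 1

namespace Cmt

open ENNReal


def shiftIdx (v y : ℤ × ℤ × ℤ) : ℤ × ℤ × ℤ := (y.1 - v.1, y.2.1 - v.2.1, y.2.2 - v.2.2)
def addIdx (v x : ℤ × ℤ × ℤ) : ℤ × ℤ × ℤ := (x.1 + v.1, x.2.1 + v.2.1, x.2.2 + v.2.2)

lemma shift_eq_iff (v y x : ℤ × ℤ × ℤ) : shiftIdx v y = x ↔ y = addIdx v x := by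
  simp only [shiftIdx, addIdx, Prod.ext_iff]; omega

lemma shift_inj (v : ℤ × ℤ × ℤ) : Function.Injective (shiftIdx v) := by
  intro a b h; simpa [shift_eq_iff, ← (shift_eq_iff v b a).mp] using
    ((shift_eq_iff v a (shiftIdx v b)).mp h).trans ((shift_eq_iff v b (shiftIdx v b)).mp rfl).symm

def shiftFun (v : ℤ × ℤ × ℤ) (c : ℤ × ℤ × ℤ → ℝ) (f : Hsp) : ∀ _ : IdxH, ℂ :=
  fun y => if h : validH (shiftIdx v y.1) then (c (shiftIdx v y.1) : ℂ) * f ⟨_, h⟩ else 0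

lemma sum_sq_le (f : Hsp) (s : Finset IdxH) :
    ∑ x ∈ s, ‖f x‖ ^ (2:ℝ) ≤ ‖f‖ ^ (2:ℝ) := by
  have h2 : (0:ℝ) < (2 : ℝ≥0∞).toReal := by norm_num
  have := lp.norm_rpow_eq_tsum h2 f
  simp only [ENNReal.toReal_ofNat] at this
  rw [this]
  exact Summable.sum_le_tsum s (fun x _ => Real.rpow_nonneg (norm_nonneg _) _)
    (by simpa using (lp.memℓp f).summable h2)

lemma shiftFun_sum_le (v : ℤ × ℤ × ℤ) (c : ℤ × ℤ × ℤ → ℝ) (M : ℝ) (hM : 0 ≤ M)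
    (hc : ∀ x, validH x → |c x| ≤ M) (f : Hsp) (s : Finset IdxH) :
    ∑ y ∈ s, ‖shiftFun v c f y‖ ^ (2:ℝ) ≤ (M * ‖f‖) ^ (2:ℝ) := by
  classical
  set u : ℤ × ℤ × ℤ → ℝ := fun z => if h : validH z then ‖f ⟨z, h⟩‖ ^ (2:ℝ) else 0 with hu
  have hunn : ∀ z, 0 ≤ u z := by
    intro z; simp only [hu]; split
    · exact Real.rpow_nonneg (norm_nonneg _) _
    · exact le_rfl
  have step1 : ∀ y : IdxH, ‖shiftFun v c f y‖ ^ (2:ℝ) ≤ M ^ (2:ℝ) * u (shiftIdx v y.1) := by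
    intro y
    by_cases h : validH (shiftIdx v y.1)
    · simp only [shiftFun, dif_pos h, hu]
      rw [← Real.mul_rpow (by positivity) (norm_nonneg _)]
      refine Real.rpow_le_rpow (norm_nonneg _) ?_ (by norm_num)
      rw [norm_mul]
      refine mul_le_mul_of_nonneg_right ?_ (norm_nonneg _)
      simpa using hc _ h
    · simp only [shiftFun, dif_neg h, hu, norm_zero]
      rw [Real.zero_rpow (by norm_num)]
      positivity
  calc ∑ y ∈ s, ‖shiftFun v c f y‖ ^ (2:ℝ)
      ≤ ∑ y ∈ s, M ^ (2:ℝ) * u (shiftIdx v y.1) := Finset.sum_le_sum fun y _ => step1 y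
    _ = M ^ (2:ℝ) * ∑ y ∈ s, u (shiftIdx v y.1) := by rw [Finset.mul_sum]
    _ = M ^ (2:ℝ) * ∑ z ∈ s.image (fun y : IdxH => shiftIdx v y.1), u z := by
        rw [Finset.sum_image]
        intro a _ b _ h
        exact Subtype.ext (shift_inj v h)
    _ ≤ M ^ (2:ℝ) * ‖f‖ ^ (2:ℝ) := by
        refine mul_le_mul_of_nonneg_left ?_ (Real.rpow_nonneg hM _)
        set w := s.image (fun y : IdxH => shiftIdx v y.1)
        calc ∑ z ∈ w, u z = ∑ z ∈ w.filter validH, u z := by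
              rw [Finset.sum_filter]
              refine Finset.sum_congr rfl fun z _ => ?_
              by_cases h : validH z
              · rw [if_pos h]
              · rw [if_neg h, hu]; simp [dif_neg h]
          _ = ∑ x ∈ w.subtype validH, u x.1 := (Finset.sum_subtype_eq_sum_filter _).symm
          _ = ∑ x ∈ w.subtype validH, ‖f x‖ ^ (2:ℝ) := by
              refine Finset.sum_congr rfl fun x _ => ?_
              simp only [hu]; rw [dif_pos x.2]
          _ ≤ ‖f‖ ^ (2:ℝ) := sum_sq_le f _
    _ = (M * ‖f‖) ^ (2:ℝ) := (Real.mul_rpow hM (norm_nonneg f)).symm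

def shiftCLM (v : ℤ × ℤ × ℤ) (c : ℤ × ℤ × ℤ → ℝ) (M : ℝ) (hM : 0 ≤ M)
    (hc : ∀ x, validH x → |c x| ≤ M) : Hsp →L[ℂ] Hsp :=
  LinearMap.mkContinuous
    { toFun := fun f => (⟨shiftFun v c f, memℓp_gen' (C := (M * ‖f‖) ^ (2:ℝ)) (fun s => by
        simpa using shiftFun_sum_le v c M hM hc f s)⟩ : Hsp)
      map_add' := fun f g => by
        apply lp.ext
        funext y
        have h1 : ∀ h : Hsp, ∀ hh, ((⟨shiftFun v c h, hh⟩ : Hsp) : ∀ _ : IdxH, ℂ) y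
            = shiftFun v c h y := fun _ _ => rfl
        simp only [lp.coeFn_add, Pi.add_apply, h1]
        unfold shiftFun
        by_cases hv : validH (shiftIdx v y.1)
        · simp only [dif_pos hv, lp.coeFn_add, Pi.add_apply]; ring
        · simp only [dif_neg hv, add_zero]
      map_smul' := fun a f => by
        apply lp.ext
        funext y
        have h1 : ∀ h : Hsp, ∀ hh, ((⟨shiftFun v c h, hh⟩ : Hsp) : ∀ _ : IdxH, ℂ) y
            = shiftFun v c h y := fun _ _ => rfl
        simp only [lp.coeFn_smul, Pi.smul_apply, RingHom.id_apply, h1]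
        unfold shiftFun
        by_cases hv : validH (shiftIdx v y.1)
        · simp only [dif_pos hv, lp.coeFn_smul, Pi.smul_apply, smul_eq_mul]; ring
        · simp only [dif_neg hv, smul_zero] } M
    (fun f => by
      refine lp.norm_le_of_forall_sum_le (by norm_num) (mul_nonneg hM (norm_nonneg f)) ?_
      intro s
      simpa using shiftFun_sum_le v c M hM hc f s)

lemma shiftFun_single (v : ℤ × ℤ × ℤ) (c : ℤ × ℤ × ℤ → ℝ) (x : IdxH) (a : ℂ) (y : IdxH) :
    shiftFun v c (lp.single 2 x a) y =
      if y.1 = addIdx v x.1 then (c x.1 : ℂ) * a else 0 := by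
  unfold shiftFun
  by_cases hvy : validH (shiftIdx v y.1)
  · rw [dif_pos hvy, lp.single_apply]
    by_cases he : (⟨shiftIdx v y.1, hvy⟩ : IdxH) = x
    · have hy1 : y.1 = addIdx v x.1 :=
        (shift_eq_iff v y.1 x.1).mp (congrArg Subtype.val he)
      rw [if_pos hy1, he, Pi.single_eq_same]
      subst he
      rfl
    · have hy1 : ¬ y.1 = addIdx v x.1 := fun hh =>
        he (Subtype.ext ((shift_eq_iff v y.1 x.1).mpr hh))
      rw [if_neg hy1, Pi.single_eq_of_ne he, mul_zero]
  · rw [dif_neg hvy, if_neg]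
    intro hh
    exact hvy ((shift_eq_iff v y.1 x.1).mpr hh ▸ x.2)

lemma shiftCLM_eH (v : ℤ × ℤ × ℤ) (c : ℤ × ℤ × ℤ → ℝ) (M : ℝ) (hM : 0 ≤ M)
    (hc : ∀ x, validH x → |c x| ≤ M) (N I J : ℤ) (h : validH (N, I, J)) :
    shiftCLM v c M hM hc (eH N I J) =
      (c (N, I, J) : ℂ) • eH (N + v.1) (I + v.2.1) (J + v.2.2) := by
  apply lp.ext
  funext y
  have hL : (shiftCLM v c M hM hc (eH N I J) : ∀ _ : IdxH, ℂ) y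
      = shiftFun v c (eH N I J) y := rfl
  have hadd : addIdx v (N, I, J) = (N + v.1, I + v.2.1, J + v.2.2) := rfl
  rw [hL, lp.coeFn_smul, Pi.smul_apply]
  rw [show eH N I J = lp.single 2 (⟨(N, I, J), h⟩ : IdxH) 1 from dif_pos h]
  rw [shiftFun_single]
  by_cases hv : validH (N + v.1, I + v.2.1, J + v.2.2)
  · rw [show eH (N + v.1) (I + v.2.1) (J + v.2.2)
        = lp.single 2 (⟨(N + v.1, I + v.2.1, J + v.2.2), hv⟩ : IdxH) 1 from dif_pos hv]
    by_cases hy : y.1 = addIdx v (N, I, J)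
    · have : y = (⟨(N + v.1, I + v.2.1, J + v.2.2), hv⟩ : IdxH) :=
        Subtype.ext (by rw [hy, hadd])
      rw [if_pos hy, this, lp.single_apply_self, mul_one, smul_eq_mul, mul_one]
    · have : y ≠ (⟨(N + v.1, I + v.2.1, J + v.2.2), hv⟩ : IdxH) := fun hh => by
        rw [hh] at hy; exact hy hadd.symm
      rw [if_neg hy, lp.single_apply_ne _ _ _ this, smul_zero]
  · rw [show eH (N + v.1) (I + v.2.1) (J + v.2.2) = 0 from dif_neg hv,
      if_neg (fun hh => hv (by rw [← hadd]; exact hh ▸ y.2))]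
    simp

section Bounds

variable {q : ℝ} (hq0 : 0 < q) (hq1 : q < 1)

lemma sqrt_le_one' {x : ℝ} (h : x ≤ 1) : Real.sqrt x ≤ 1 := by
  calc Real.sqrt x ≤ Real.sqrt 1 := Real.sqrt_le_sqrt h
    _ = 1 := Real.sqrt_one

include hq0 hq1 in
lemma key_mul_rpow (k : ℤ) (hk : 0 ≤ k) : (k : ℝ) * q ^ (k : ℝ) ≤ 1 / (1 - q) := by
  have h1q : (0:ℝ) < 1 - q := by linarith
  obtain ⟨n, rfl⟩ := Int.eq_ofNat_of_zero_le hk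
  rw [Int.cast_natCast, Real.rpow_natCast, le_div_iff₀ h1q]
  have hnn : (0:ℝ) ≤ (1 - q) / q := div_nonneg (by linarith) hq0.le
  have hb := one_add_mul_le_pow (a := (1 - q) / q) (by linarith) n
  have h1a : 1 + (1 - q) / q = 1 / q := by field_simp; ring
  rw [h1a] at hb
  have hb2 : (n : ℝ) * ((1 - q) / q) ≤ (1 / q) ^ n :=
    le_trans (le_add_of_nonneg_left zero_le_one) hb
  have e1 : ((1:ℝ) / q) ^ n * q ^ n = 1 := by
    rw [← mul_pow]
    field_simp
    exact one_pow n
  calc (n : ℝ) * q ^ n * (1 - q) = (n : ℝ) * ((1 - q) / q) * (q ^ n * q) := by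
        field_simp
    _ ≤ (1 / q) ^ n * (q ^ n * q) := mul_le_mul_of_nonneg_right hb2 (by positivity)
    _ = ((1 / q) ^ n * q ^ n) * q := by ring
    _ = q := by rw [e1, one_mul]
    _ ≤ 1 := hq1.le

include hq0 hq1 in
lemma one_le_Mq : 1 ≤ 4 / (1 - q) := by
  rw [le_div_iff₀ (by linarith : (0:ℝ) < 1 - q)]; linarith

include hq0 hq1 in
lemma aC1_mem (N I J : ℤ) (h : validH (N, I, J)) :
    0 ≤ aC1 q N I J ∧ aC1 q N I J ≤ 1 := by
  obtain ⟨h1, h2, h3, -, -⟩ := h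
  rw [abs_le] at h2 h3
  have hI : -(N:ℝ) ≤ I := by exact_mod_cast h2.1
  have hJ : -(N:ℝ) ≤ J := by exact_mod_cast h3.1
  exact ⟨Real.rpow_nonneg hq0.le _,
    Real.rpow_le_one hq0.le hq1.le (by dsimp [aC1] at *; linarith)⟩

include hq0 in
lemma aC2_mem (N I J : ℤ) : 0 ≤ aC2 q N I J ∧ aC2 q N I J ≤ 1 := by
  constructor
  · exact mul_nonneg (Real.sqrt_nonneg _) (Real.sqrt_nonneg _)
  · have h1 : Real.sqrt (1 - q ^ ((N:ℝ) + (I:ℝ))) ≤ 1 :=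
      sqrt_le_one' (by linarith [Real.rpow_nonneg hq0.le ((N:ℝ) + (I:ℝ))])
    have h2 : Real.sqrt (1 - q ^ ((N:ℝ) + (J:ℝ))) ≤ 1 :=
      sqrt_le_one' (by linarith [Real.rpow_nonneg hq0.le ((N:ℝ) + (J:ℝ))])
    calc aC2 q N I J ≤ 1 * 1 := mul_le_mul h1 h2 (Real.sqrt_nonneg _) zero_le_one
      _ = 1 := mul_one 1

include hq0 in
lemma bC1_abs (N I J : ℤ) : |bC1 q N I J| ≤ q ^ (((N:ℝ) + (J:ℝ)) / 2) := by
  have h1 : (0:ℝ) ≤ q ^ (((N:ℝ) + (J:ℝ)) / 2) := Real.rpow_nonneg hq0.le _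
  have h2 : 0 ≤ Real.sqrt (1 - q ^ ((N:ℝ) + (I:ℝ) + 2)) := Real.sqrt_nonneg _
  have h3 : Real.sqrt (1 - q ^ ((N:ℝ) + (I:ℝ) + 2)) ≤ 1 :=
    sqrt_le_one' (by linarith [Real.rpow_nonneg hq0.le ((N:ℝ) + (I:ℝ) + 2)])
  rw [bC1, abs_mul, abs_neg, abs_of_nonneg h1, abs_of_nonneg h2]
  calc q ^ (((N:ℝ) + (J:ℝ)) / 2) * Real.sqrt (1 - q ^ ((N:ℝ) + (I:ℝ) + 2))
      ≤ q ^ (((N:ℝ) + (J:ℝ)) / 2) * 1 := mul_le_mul_of_nonneg_left h3 h1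
    _ = _ := mul_one _

include hq0 in
lemma bC2_abs (N I J : ℤ) : |bC2 q N I J| ≤ q ^ (((N:ℝ) + (I:ℝ)) / 2) := by
  have h1 : (0:ℝ) ≤ q ^ (((N:ℝ) + (I:ℝ)) / 2) := Real.rpow_nonneg hq0.le _
  have h2 : 0 ≤ Real.sqrt (1 - q ^ ((N:ℝ) + (J:ℝ))) := Real.sqrt_nonneg _
  have h3 : Real.sqrt (1 - q ^ ((N:ℝ) + (J:ℝ))) ≤ 1 :=
    sqrt_le_one' (by linarith [Real.rpow_nonneg hq0.le ((N:ℝ) + (J:ℝ))])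
  rw [bC2, abs_mul, abs_of_nonneg h1, abs_of_nonneg h2]
  calc q ^ (((N:ℝ) + (I:ℝ)) / 2) * Real.sqrt (1 - q ^ ((N:ℝ) + (J:ℝ)))
      ≤ q ^ (((N:ℝ) + (I:ℝ)) / 2) * 1 := mul_le_mul_of_nonneg_left h3 h1
    _ = _ := mul_one _

include hq0 hq1 in
lemma bC1_mem (N I J : ℤ) (h : validH (N, I, J)) : |bC1 q N I J| ≤ 1 := by
  obtain ⟨h1, -, h3, -, -⟩ := h
  rw [abs_le] at h3
  have hJ : -(N:ℝ) ≤ J := by exact_mod_cast h3.1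
  exact le_trans (bC1_abs hq0 N I J)
    (Real.rpow_le_one hq0.le hq1.le (by linarith))

include hq0 hq1 in
lemma bC2_mem (N I J : ℤ) (h : validH (N, I, J)) : |bC2 q N I J| ≤ 1 := by
  obtain ⟨h1, h2, -, -, -⟩ := h
  rw [abs_le] at h2
  have hI : -(N:ℝ) ≤ I := by exact_mod_cast h2.1
  exact le_trans (bC2_abs hq0 N I J)
    (Real.rpow_le_one hq0.le hq1.le (by linarith))

end Bounds

section CF

def cf1a (q : ℝ) (x : ℤ × ℤ × ℤ) : ℝ :=
  (lamD1 (x.1 + 1) (x.2.1 - 1) (x.2.2 - 1) - lamD1 x.1 x.2.1 x.2.2) * aC1 q x.1 x.2.1 x.2.2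

def cf1b (q : ℝ) (x : ℤ × ℤ × ℤ) : ℝ :=
  (lamD1 (x.1 - 1) (x.2.1 - 1) (x.2.2 - 1) - lamD1 x.1 x.2.1 x.2.2) * aC2 q x.1 x.2.1 x.2.2

def cf2a (q : ℝ) (x : ℤ × ℤ × ℤ) : ℝ :=
  (lamD1 (x.1 + 1) (x.2.1 + 1) (x.2.2 - 1) - lamD1 x.1 x.2.1 x.2.2) * bC1 q x.1 x.2.1 x.2.2

def cf2b (q : ℝ) (x : ℤ × ℤ × ℤ) : ℝ :=
  (lamD1 (x.1 - 1) (x.2.1 + 1) (x.2.2 - 1) - lamD1 x.1 x.2.1 x.2.2) * bC2 q x.1 x.2.1 x.2.2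

def cf3a (q : ℝ) (x : ℤ × ℤ × ℤ) : ℝ :=
  (lamD2 (x.1 + 1) (x.2.1 - 1) (x.2.2 - 1) - lamD2 x.1 x.2.1 x.2.2) * aC1 q x.1 x.2.1 x.2.2

def cf3b (q : ℝ) (x : ℤ × ℤ × ℤ) : ℝ :=
  (lamD2 (x.1 - 1) (x.2.1 - 1) (x.2.2 - 1) - lamD2 x.1 x.2.1 x.2.2) * aC2 q x.1 x.2.1 x.2.2

def cf4a (q : ℝ) (x : ℤ × ℤ × ℤ) : ℝ :=
  (lamD2 (x.1 + 1) (x.2.1 + 1) (x.2.2 - 1) - lamD2 x.1 x.2.1 x.2.2) * bC1 q x.1 x.2.1 x.2.2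

def cf4b (q : ℝ) (x : ℤ × ℤ × ℤ) : ℝ :=
  (lamD2 (x.1 - 1) (x.2.1 + 1) (x.2.2 - 1) - lamD2 x.1 x.2.1 x.2.2) * bC2 q x.1 x.2.1 x.2.2

variable {q : ℝ} (hq0 : 0 < q) (hq1 : q < 1)

include hq0 hq1 in
lemma abs_mul_le_Mq {d c : ℝ} (hd : |d| ≤ 1) (hc : |c| ≤ 1) : |d * c| ≤ 4 / (1 - q) := by
  rw [abs_mul]
  calc |d| * |c| ≤ 1 * 1 := mul_le_mul hd hc (abs_nonneg _) zero_le_one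
    _ = 1 := mul_one 1
    _ ≤ 4 / (1 - q) := one_le_Mq hq0 hq1

include hq0 hq1 in
lemma bnd1a : ∀ x, validH x → |cf1a q x| ≤ 4 / (1 - q) := by
  rintro ⟨N, I, J⟩ h
  have h1q : (0:ℝ) < 1 - q := by linarith
  obtain ⟨haC10, haC11⟩ := aC1_mem hq0 hq1 N I J h
  have hN : 0 ≤ N := h.1
  have hJN : J ≤ N := le_trans (le_abs_self J) h.2.2.1
  have hIN : -N ≤ I := (abs_le.mp h.2.1).1
  have hNr : (0:ℝ) ≤ N := by exact_mod_cast hN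
  have hIr : -(N:ℝ) ≤ I := by exact_mod_cast hIN
  have hJr : (J:ℝ) ≤ N := by exact_mod_cast hJN
  simp only [cf1a, lamD1]
  rw [if_neg (by omega : ¬ J - 1 = N + 1)]
  by_cases hJ : J = N
  · rw [if_pos hJ]
    have hJr' : (J:ℝ) = N := by exact_mod_cast hJ
    have hle : aC1 q N I J ≤ q ^ ((N:ℝ) + 1) := by
      apply Real.rpow_le_rpow_of_exponent_ge hq0 hq1.le
      rw [aC1] at *
      linarith
    have hkey := key_mul_rpow hq0 hq1 (N + 1) (by omega)
    push_cast at hkey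
    have hA0 : (0:ℝ) ≤ q ^ ((N:ℝ) + 1) := Real.rpow_nonneg hq0.le _
    rw [abs_mul]
    calc |(-((N:ℤ) + 1 : ℤ) - ((N:ℝ) + 1) : ℝ)| * |aC1 q N I J|
        ≤ (2 * (N:ℝ) + 2) * q ^ ((N:ℝ) + 1) := by
          refine mul_le_mul ?_ ?_ (abs_nonneg _) (by linarith)
          · rw [abs_le]; constructor <;> push_cast <;> linarith
          · rw [abs_of_nonneg haC10]; exact hle
      _ ≤ 4 / (1 - q) := by
          have h4 : (0:ℝ) ≤ 1 / (1 - q) := by positivity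
          have e : (4:ℝ) / (1 - q) = 4 * (1 / (1 - q)) := by ring
          nlinarith [hkey, hA0]
  · rw [if_neg hJ]
    exact abs_mul_le_Mq hq0 hq1
      (by rw [abs_le]; constructor <;> push_cast <;> linarith)
      (by rw [abs_of_nonneg haC10]; exact haC11)

include hq0 hq1 in
lemma bnd1b : ∀ x, validH x → |cf1b q x| ≤ 4 / (1 - q) := by
  rintro ⟨N, I, J⟩ h
  obtain ⟨haC20, haC21⟩ := aC2_mem hq0 N I J
  have hN : 0 ≤ N := h.1
  have hJN : J ≤ N := le_trans (le_abs_self J) h.2.2.1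
  have hNr : (0:ℝ) ≤ N := by exact_mod_cast hN
  simp only [cf1b, lamD1]
  have hc : |aC2 q N I J| ≤ 1 := by rw [abs_of_nonneg haC20]; exact haC21
  by_cases hJ : J = N
  · rw [if_pos (by omega : J - 1 = N - 1), if_pos hJ]
    exact abs_mul_le_Mq hq0 hq1
      (by rw [abs_le]; constructor <;> push_cast <;> linarith) hc
  · rw [if_neg (by omega : ¬ J - 1 = N - 1), if_neg hJ]
    exact abs_mul_le_Mq hq0 hq1
      (by rw [abs_le]; constructor <;> push_cast <;> linarith) hc

include hq0 hq1 in
lemma bnd2a : ∀ x, validH x → |cf2a q x| ≤ 4 / (1 - q) := by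
  rintro ⟨N, I, J⟩ h
  have h1q : (0:ℝ) < 1 - q := by linarith
  have hN : 0 ≤ N := h.1
  have hJN : J ≤ N := le_trans (le_abs_self J) h.2.2.1
  have hNr : (0:ℝ) ≤ N := by exact_mod_cast hN
  have hJr : (J:ℝ) ≤ N := by exact_mod_cast hJN
  have hb1 := bC1_mem hq0 hq1 N I J h
  simp only [cf2a, lamD1]
  rw [if_neg (by omega : ¬ J - 1 = N + 1)]
  by_cases hJ : J = N
  · rw [if_pos hJ]
    have hJr' : (J:ℝ) = N := by exact_mod_cast hJ
    have hle : |bC1 q N I J| ≤ q ^ ((N:ℝ)) := by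
      refine le_trans (bC1_abs hq0 N I J) ?_
      rw [show ((N:ℝ) + (J:ℝ)) / 2 = (N:ℝ) + ((J:ℝ) - (N:ℝ)) / 2 by ring, hJr']
      simp
    have hkey := key_mul_rpow hq0 hq1 N hN
    have hq1' : q ^ ((N:ℝ)) ≤ 1 := Real.rpow_le_one hq0.le hq1.le hNr
    have hA0 : (0:ℝ) ≤ q ^ ((N:ℝ)) := Real.rpow_nonneg hq0.le _
    rw [abs_mul]
    calc |(-((N:ℤ) + 1 : ℤ) - ((N:ℝ) + 1) : ℝ)| * |bC1 q N I J|
        ≤ (2 * (N:ℝ) + 2) * q ^ ((N:ℝ)) := by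
          refine mul_le_mul ?_ hle (abs_nonneg _) (by linarith)
          rw [abs_le]; constructor <;> push_cast <;> linarith
      _ ≤ 4 / (1 - q) := by
          have h4 : (1:ℝ) ≤ 1 / (1 - q) := by rw [le_div_iff₀ h1q]; linarith
          have e : (4:ℝ) / (1 - q) = 4 * (1 / (1 - q)) := by ring
          nlinarith [hkey, hA0, hq1']
  · rw [if_neg hJ]
    exact abs_mul_le_Mq hq0 hq1
      (by rw [abs_le]; constructor <;> push_cast <;> linarith) hb1

include hq0 hq1 in
lemma bnd2b : ∀ x, validH x → |cf2b q x| ≤ 4 / (1 - q) := by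
  rintro ⟨N, I, J⟩ h
  have hN : 0 ≤ N := h.1
  have hJN : J ≤ N := le_trans (le_abs_self J) h.2.2.1
  have hNr : (0:ℝ) ≤ N := by exact_mod_cast hN
  have hb2 := bC2_mem hq0 hq1 N I J h
  simp only [cf2b, lamD1]
  by_cases hJ : J = N
  · rw [if_pos (by omega : J - 1 = N - 1), if_pos hJ]
    exact abs_mul_le_Mq hq0 hq1
      (by rw [abs_le]; constructor <;> push_cast <;> linarith) hb2
  · rw [if_neg (by omega : ¬ J - 1 = N - 1), if_neg hJ]
    exact abs_mul_le_Mq hq0 hq1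
      (by rw [abs_le]; constructor <;> push_cast <;> linarith) hb2

include hq0 hq1 in
lemma bnd3a : ∀ x, validH x → |cf3a q x| ≤ 4 / (1 - q) := by
  rintro ⟨N, I, J⟩ h
  obtain ⟨haC10, haC11⟩ := aC1_mem hq0 hq1 N I J h
  simp only [cf3a, lamD2]
  exact abs_mul_le_Mq hq0 hq1
    (by rw [abs_le]; constructor <;> push_cast <;> linarith)
    (by rw [abs_of_nonneg haC10]; exact haC11)

include hq0 hq1 in
lemma bnd3b : ∀ x, validH x → |cf3b q x| ≤ 4 / (1 - q) := by
  rintro ⟨N, I, J⟩ h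
  obtain ⟨haC20, haC21⟩ := aC2_mem hq0 N I J
  simp only [cf3b, lamD2]
  exact abs_mul_le_Mq hq0 hq1
    (by rw [abs_le]; constructor <;> push_cast <;> linarith)
    (by rw [abs_of_nonneg haC20]; exact haC21)

include hq0 hq1 in
lemma bnd4a : ∀ x, validH x → |cf4a q x| ≤ 4 / (1 - q) := by
  rintro ⟨N, I, J⟩ h
  have hb1 := bC1_mem hq0 hq1 N I J h
  simp only [cf4a, lamD2]
  exact abs_mul_le_Mq hq0 hq1
    (by rw [abs_le]; constructor <;> push_cast <;> linarith) hb1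

include hq0 hq1 in
lemma bnd4b : ∀ x, validH x → |cf4b q x| ≤ 4 / (1 - q) := by
  rintro ⟨N, I, J⟩ h
  have hb2 := bC2_mem hq0 hq1 N I J h
  simp only [cf4b, lamD2]
  exact abs_mul_le_Mq hq0 hq1
    (by rw [abs_le]; constructor <;> push_cast <;> linarith) hb2

end CF

end Cmt

/-- Each of the commutators `[D₁, α̂]`, `[D₁, β̂]`, `[|D₂|, α̂]`, `[|D₂|, β̂]`,
defined on the algebraic span of the basis vectors of `H`, extends to a bounded operator on
`H`. -/
theorem commutators_D1_absD2_bounded (q : ℝ) (hq0 : 0 < q) (hq1 : q < 1) :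
    ∃ T₁ T₂ T₃ T₄ : Hsp →L[ℂ] Hsp, ∀ N I J : ℤ, validH (N, I, J) →
      T₁ (eH N I J) =
          (((lamD1 (N+1) (I-1) (J-1) - lamD1 N I J) * aC1 q N I J : ℝ) : ℂ) •
              eH (N+1) (I-1) (J-1)
            + (((lamD1 (N-1) (I-1) (J-1) - lamD1 N I J) * aC2 q N I J : ℝ) : ℂ) •
              eH (N-1) (I-1) (J-1) ∧
      T₂ (eH N I J) =
          (((lamD1 (N+1) (I+1) (J-1) - lamD1 N I J) * bC1 q N I J : ℝ) : ℂ) •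
              eH (N+1) (I+1) (J-1)
            + (((lamD1 (N-1) (I+1) (J-1) - lamD1 N I J) * bC2 q N I J : ℝ) : ℂ) •
              eH (N-1) (I+1) (J-1) ∧
      T₃ (eH N I J) =
          (((lamD2 (N+1) (I-1) (J-1) - lamD2 N I J) * aC1 q N I J : ℝ) : ℂ) •
              eH (N+1) (I-1) (J-1)
            + (((lamD2 (N-1) (I-1) (J-1) - lamD2 N I J) * aC2 q N I J : ℝ) : ℂ) •
              eH (N-1) (I-1) (J-1) ∧
      T₄ (eH N I J) =
          (((lamD2 (N+1) (I+1) (J-1) - lamD2 N I J) * bC1 q N I J : ℝ) : ℂ) •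
              eH (N+1) (I+1) (J-1)
            + (((lamD2 (N-1) (I+1) (J-1) - lamD2 N I J) * bC2 q N I J : ℝ) : ℂ) •
              eH (N-1) (I+1) (J-1) := by
  have hM : (0:ℝ) ≤ 4 / (1 - q) := le_trans zero_le_one (Cmt.one_le_Mq hq0 hq1)
  refine ⟨Cmt.shiftCLM (1, -1, -1) (Cmt.cf1a q) _ hM (Cmt.bnd1a hq0 hq1)
        + Cmt.shiftCLM (-1, -1, -1) (Cmt.cf1b q) _ hM (Cmt.bnd1b hq0 hq1),
      Cmt.shiftCLM (1, 1, -1) (Cmt.cf2a q) _ hM (Cmt.bnd2a hq0 hq1)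
        + Cmt.shiftCLM (-1, 1, -1) (Cmt.cf2b q) _ hM (Cmt.bnd2b hq0 hq1),
      Cmt.shiftCLM (1, -1, -1) (Cmt.cf3a q) _ hM (Cmt.bnd3a hq0 hq1)
        + Cmt.shiftCLM (-1, -1, -1) (Cmt.cf3b q) _ hM (Cmt.bnd3b hq0 hq1),
      Cmt.shiftCLM (1, 1, -1) (Cmt.cf4a q) _ hM (Cmt.bnd4a hq0 hq1)
        + Cmt.shiftCLM (-1, 1, -1) (Cmt.cf4b q) _ hM (Cmt.bnd4b hq0 hq1),
      fun N I J h => ⟨?_, ?_, ?_, ?_⟩⟩ <;>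
  · rw [ContinuousLinearMap.add_apply, Cmt.shiftCLM_eH _ _ _ _ _ N I J h,
      Cmt.shiftCLM_eH _ _ _ _ _ N I J h]
    simp only [Cmt.cf1a, Cmt.cf1b, Cmt.cf2a, Cmt.cf2b, Cmt.cf3a, Cmt.cf3b, Cmt.cf4a,
      Cmt.cf4b, ← sub_eq_add_neg]
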